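/- For a pointed topological space (X, x₀), π₁^wh(X, x₀) is a topological group if and only if for every [η] ∈ π₁(X, x₀) the conjugation map c_[η] : π₁^wh(X, x₀) → π₁^wh(X, x₀), c_[η]([κ]) = [η][κ][η⁻], is continuous. -/

import Mathlib

open Set TopologicalSpace

attribute [local instance] Path.Homotopic.setoid


universe u v

variable {X : Type u} [TopologicalSpace X]

/-- The basic whisker-topology set `B([ζ],U)`: all classes of the form `[ζ·η]`
where `η` is a loop based at `x₀` with image in `U`. -/
def whiskerB {x₀ : X} (ζ : Path.Homotopic.Quotient x₀ x₀) (U : Set X) :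
    Set (Path.Homotopic.Quotient x₀ x₀) :=
  {g | ∃ η : Path x₀ x₀, Set.range η ⊆ U ∧ g = ζ.trans ⟦η⟧}

/-- The whisker topology on `π₁(X, x₀)`, generated by the basic sets `B([ζ],U)`
for `U` an open neighborhood of `x₀`. -/
def whiskerTopology (x₀ : X) : TopologicalSpace (Path.Homotopic.Quotient x₀ x₀) :=
  TopologicalSpace.generateFrom
    {S | ∃ (ζ : Path.Homotopic.Quotient x₀ x₀) (U : Set X),
      IsOpen U ∧ x₀ ∈ U ∧ S = whiskerB ζ U}

/-- Inversion `[ζ] ↦ [ζ⁻]` on `π₁(X, x₀)`. -/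
def whiskerInv {x₀ : X} : Path.Homotopic.Quotient x₀ x₀ → Path.Homotopic.Quotient x₀ x₀ :=
  Quotient.map Path.symm (fun _ _ h => Nonempty.map Path.Homotopy.symm₂ h)

/-- `π₁^wh(X, x₀)` is a topological group: the multiplication `([ζ],[η]) ↦ [ζ·η]`
is jointly continuous and inversion `[ζ] ↦ [ζ⁻]` is continuous, with respect to
the whisker topology. -/
def IsWhiskerTopGroup (x₀ : X) : Prop :=
  letI := whiskerTopology x₀
  Continuous (fun p : Path.Homotopic.Quotient x₀ x₀ × Path.Homotopic.Quotient x₀ x₀ =>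
    p.1.trans p.2) ∧
  Continuous (whiskerInv (x₀ := x₀))

/-! ### Auxiliary group structure on `π₁(X, x₀)` -/

lemma Path.Homotopic.comp_lift {x₀ x₁ x₂ : X} (P₀ : Path x₀ x₁) (P₁ : Path x₁ x₂) :
    (⟦P₀.trans P₁⟧ : Path.Homotopic.Quotient x₀ x₂) =
      Path.Homotopic.Quotient.trans ⟦P₀⟧ ⟦P₁⟧ := rfl

lemma q_assoc {x₀ : X} (a b c : Path.Homotopic.Quotient x₀ x₀) :
    (a.trans b).trans c = a.trans (b.trans c) := by
  refine Quotient.inductionOn₃ a b c fun p q r => ?_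
  rw [← Path.Homotopic.comp_lift, ← Path.Homotopic.comp_lift,
    ← Path.Homotopic.comp_lift, ← Path.Homotopic.comp_lift]
  exact Quotient.sound ⟨Path.Homotopy.transAssoc p q r⟩

lemma q_one_comp {x₀ : X} (a : Path.Homotopic.Quotient x₀ x₀) :
    Path.Homotopic.Quotient.trans ⟦Path.refl x₀⟧ a = a := by
  refine Quotient.inductionOn a fun p => ?_
  rw [← Path.Homotopic.comp_lift]
  exact Quotient.sound ⟨Path.Homotopy.reflTrans p⟩

lemma q_comp_one {x₀ : X} (a : Path.Homotopic.Quotient x₀ x₀) :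
    a.trans ⟦Path.refl x₀⟧ = a := by
  refine Quotient.inductionOn a fun p => ?_
  rw [← Path.Homotopic.comp_lift]
  exact Quotient.sound ⟨Path.Homotopy.transRefl p⟩

lemma q_inv_comp {x₀ : X} (a : Path.Homotopic.Quotient x₀ x₀) :
    (whiskerInv a).trans a = ⟦Path.refl x₀⟧ := by
  refine Quotient.inductionOn a fun p => ?_
  show Path.Homotopic.Quotient.trans ⟦p.symm⟧ ⟦p⟧ = _
  rw [← Path.Homotopic.comp_lift]
  exact Quotient.sound ⟨(Path.Homotopy.reflSymmTrans p).symm⟩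

/-- A local group structure on `π₁(X, x₀)` with multiplication given by path
composition and inverse given by path reversal. -/
noncomputable instance wGroup (x₀ : X) : Group (Path.Homotopic.Quotient x₀ x₀) where
  mul a b := a.trans b
  one := ⟦Path.refl x₀⟧
  inv := whiskerInv
  mul_assoc := q_assoc
  one_mul := q_one_comp
  mul_one := q_comp_one
  inv_mul_cancel := q_inv_comp

/-- The class of a loop, as an element of `π₁(X, x₀)`. -/
abbrev qm {x₀ : X} (p : Path x₀ x₀) : Path.Homotopic.Quotient x₀ x₀ := ⟦p⟧

lemma comp_eq_mul {x₀ : X} (a b : Path.Homotopic.Quotient x₀ x₀) : a.trans b = a * b := rfl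

lemma inv_eq_inv {x₀ : X} (a : Path.Homotopic.Quotient x₀ x₀) : whiskerInv a = a⁻¹ := rfl

lemma inv_mk {x₀ : X} (p : Path x₀ x₀) : (qm p)⁻¹ = qm p.symm := rfl

lemma mk_mul {x₀ : X} (p q : Path x₀ x₀) : qm p * qm q = qm (p.trans q) :=
  (Path.Homotopic.comp_lift p q).symm

/-! ### Basic facts about `whiskerB` and the whisker topology -/

lemma mem_whiskerB_self {x₀ : X} {ζ : Path.Homotopic.Quotient x₀ x₀} {U : Set X}
    (h : x₀ ∈ U) : ζ ∈ whiskerB ζ U :=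
  ⟨Path.refl x₀, by rw [Path.refl_range]; simpa using h, (q_comp_one ζ).symm⟩

lemma whiskerB_mono {x₀ : X} {ζ : Path.Homotopic.Quotient x₀ x₀} {U V : Set X}
    (h : U ⊆ V) : whiskerB ζ U ⊆ whiskerB ζ V := by
  rintro g ⟨η, hη, rfl⟩
  exact ⟨η, hη.trans h, rfl⟩

lemma whiskerB_subset {x₀ : X} {ζ κ : Path.Homotopic.Quotient x₀ x₀} {U : Set X}
    (h : κ ∈ whiskerB ζ U) : whiskerB κ U ⊆ whiskerB ζ U := by
  obtain ⟨η, hη, rfl⟩ := h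
  rintro g ⟨η', hη', rfl⟩
  refine ⟨η.trans η', ?_, ?_⟩
  · rw [Path.trans_range]; exact union_subset hη hη'
  · rw [Path.Homotopic.comp_lift]
    exact q_assoc ζ ⟦η⟧ ⟦η'⟧

lemma isOpen_whisker_iff {x₀ : X} {S : Set (Path.Homotopic.Quotient x₀ x₀)} :
    @IsOpen _ (whiskerTopology x₀) S ↔
      ∀ ζ ∈ S, ∃ U, IsOpen U ∧ x₀ ∈ U ∧ whiskerB ζ U ⊆ S := by
  constructor
  · intro h
    induction h with
    | basic T hT =>
      obtain ⟨ζ, U, hU, hx, rfl⟩ := hT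
      exact fun κ hκ => ⟨U, hU, hx, whiskerB_subset hκ⟩
    | univ => exact fun ζ _ => ⟨univ, isOpen_univ, mem_univ _, subset_univ _⟩
    | inter S T _ _ ihS ihT =>
      rintro ζ ⟨hζS, hζT⟩
      obtain ⟨U, hU, hxU, hUS⟩ := ihS ζ hζS
      obtain ⟨V, hV, hxV, hVT⟩ := ihT ζ hζT
      exact ⟨U ∩ V, hU.inter hV, ⟨hxU, hxV⟩,
        subset_inter ((whiskerB_mono inter_subset_left).trans hUS)
          ((whiskerB_mono inter_subset_right).trans hVT)⟩
    | sUnion 𝒮 _ ih =>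
      rintro ζ ⟨T, hT, hζ⟩
      obtain ⟨U, hU, hx, hsub⟩ := ih T hT ζ hζ
      exact ⟨U, hU, hx, hsub.trans (subset_sUnion_of_mem hT)⟩
  · intro h
    have hS : S = ⋃₀ {T | (∃ (ζ : Path.Homotopic.Quotient x₀ x₀) (U : Set X),
        IsOpen U ∧ x₀ ∈ U ∧ T = whiskerB ζ U) ∧ T ⊆ S} := by
      apply Subset.antisymm
      · intro ζ hζ
        obtain ⟨U, hU, hx, hsub⟩ := h ζ hζ
        exact ⟨whiskerB ζ U, ⟨⟨ζ, U, hU, hx, rfl⟩, hsub⟩, mem_whiskerB_self hx⟩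
      · rintro g ⟨T, ⟨_, hTS⟩, hg⟩
        exact hTS hg
    rw [hS]
    exact TopologicalSpace.GenerateOpen.sUnion _ fun T hT =>
      TopologicalSpace.GenerateOpen.basic T hT.1

lemma whiskerB_isOpen {x₀ : X} (ζ : Path.Homotopic.Quotient x₀ x₀) {U : Set X}
    (hU : IsOpen U) (hx : x₀ ∈ U) : @IsOpen _ (whiskerTopology x₀) (whiskerB ζ U) :=
  TopologicalSpace.GenerateOpen.basic _ ⟨ζ, U, hU, hx, rfl⟩

/-- Elements of `B(1,V)` are classes of loops with range in `V`. -/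
lemma mem_whiskerB_one {x₀ : X} {g : Path.Homotopic.Quotient x₀ x₀} {V : Set X} :
    g ∈ whiskerB 1 V ↔ ∃ η : Path x₀ x₀, Set.range η ⊆ V ∧ g = qm η := by
  constructor
  · rintro ⟨η, hη, rfl⟩
    exact ⟨η, hη, (q_one_comp ⟦η⟧ : _)⟩
  · rintro ⟨η, hη, rfl⟩
    exact ⟨η, hη, (q_one_comp ⟦η⟧).symm⟩

/-- From continuity of all conjugations: for any `η` and open `U ∋ x₀` there is
an open `V ∋ x₀` with `η ⬝ B(1,V) ⬝ η⁻¹ ⊆ B(1,U)`. -/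
lemma conj_key {x₀ : X}
    (H : ∀ η : Path.Homotopic.Quotient x₀ x₀,
      @Continuous _ _ (whiskerTopology x₀) (whiskerTopology x₀)
        (fun κ : Path.Homotopic.Quotient x₀ x₀ => (η.trans κ).trans (whiskerInv η)))
    (η : Path.Homotopic.Quotient x₀ x₀) {U : Set X} (hU : IsOpen U) (hx : x₀ ∈ U) :
    ∃ V, IsOpen V ∧ x₀ ∈ V ∧
      ∀ a : Path.Homotopic.Quotient x₀ x₀, a ∈ whiskerB 1 V → η * a * η⁻¹ ∈ whiskerB 1 U := by
  letI := whiskerTopology x₀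
  have hpre : IsOpen
      ((fun κ : Path.Homotopic.Quotient x₀ x₀ => (η.trans κ).trans (whiskerInv η)) ⁻¹'
        whiskerB 1 U) :=
    (H η).isOpen_preimage _ (whiskerB_isOpen 1 hU hx)
  have hmem : (1 : Path.Homotopic.Quotient x₀ x₀) ∈
      ((fun κ : Path.Homotopic.Quotient x₀ x₀ => (η.trans κ).trans (whiskerInv η)) ⁻¹'
        whiskerB 1 U) := by
    show (η.trans 1).trans (whiskerInv η) ∈ whiskerB 1 U
    rw [comp_eq_mul, comp_eq_mul, inv_eq_inv, mul_one, mul_inv_cancel]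
    exact mem_whiskerB_self hx
  obtain ⟨V, hV, hxV, hsub⟩ := isOpen_whisker_iff.1 hpre 1 hmem
  refine ⟨V, hV, hxV, fun a ha => ?_⟩
  have h2 := hsub ha
  rw [mem_preimage, comp_eq_mul, comp_eq_mul, inv_eq_inv] at h2
  exact h2

/-- `π₁^wh(X, x₀)` is a topological group if and only if every conjugation
`c_[η] : [κ] ↦ [η][κ][η⁻]` is continuous. -/
theorem whisker_topGroup_iff_conjugation_continuous (x₀ : X) :
    IsWhiskerTopGroup x₀ ↔
    ∀ η : Path.Homotopic.Quotient x₀ x₀,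
      @Continuous _ _ (whiskerTopology x₀) (whiskerTopology x₀)
        (fun κ : Path.Homotopic.Quotient x₀ x₀ => (η.trans κ).trans (whiskerInv η)) := by
  constructor
  · rintro ⟨hm, _⟩ η
    letI := whiskerTopology x₀
    have h1 : Continuous fun κ : Path.Homotopic.Quotient x₀ x₀ => η.trans κ :=
      hm.comp (continuous_const.prodMk continuous_id)
    exact hm.comp (h1.prodMk continuous_const)
  · intro H
    letI := whiskerTopology x₀
    constructor
    · -- continuity of multiplication
      rw [continuous_def]
      intro S hS
      rw [isOpen_prod_iff]
      intro κ lam hmem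
      obtain ⟨U, hU, hxU, hUS⟩ := isOpen_whisker_iff.1 hS _ hmem
      obtain ⟨V, hV, hxV, hVkey⟩ := conj_key H lam⁻¹ hU hxU
      refine ⟨whiskerB κ V, whiskerB lam U, whiskerB_isOpen κ hV hxV,
        whiskerB_isOpen lam hU hxU, mem_whiskerB_self hxV, mem_whiskerB_self hxU, ?_⟩
      rintro ⟨g₁, g₂⟩ ⟨⟨a, ha, rfl⟩, ⟨b, hb, rfl⟩⟩
      apply hUS
      have hc : lam⁻¹ * qm a * lam⁻¹⁻¹ ∈ whiskerB 1 U :=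
        hVkey _ (mem_whiskerB_one.2 ⟨a, ha, rfl⟩)
      obtain ⟨e, he, hce⟩ := mem_whiskerB_one.1 hc
      rw [inv_inv] at hce
      refine ⟨e.trans b, ?_, ?_⟩
      · rw [Path.trans_range]; exact union_subset he hb
      · show κ * qm a * (lam * qm b) = κ * lam * qm (e.trans b)
        rw [← mk_mul, ← hce]
        group
    · -- continuity of inversion
      rw [continuous_def]
      intro S hS
      rw [isOpen_whisker_iff]
      intro κ hκ
      obtain ⟨U, hU, hxU, hUS⟩ := isOpen_whisker_iff.1 hS _ hκ
      obtain ⟨V, hV, hxV, hVkey⟩ := conj_key H κ hU hxU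
      refine ⟨V, hV, hxV, ?_⟩
      rintro g ⟨a, ha, rfl⟩
      apply hUS
      have hc : κ * qm a.symm * κ⁻¹ ∈ whiskerB 1 U := by
        refine hVkey _ (mem_whiskerB_one.2 ⟨a.symm, ?_, rfl⟩)
        rwa [Path.symm_range]
      obtain ⟨e, he, hce⟩ := mem_whiskerB_one.1 hc
      refine ⟨e, he, ?_⟩
      show (κ * qm a)⁻¹ = κ⁻¹ * qm e
      rw [← hce, ← inv_mk]
      group
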